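/- Let n ≥ 2, let F : ℝⁿ → ℝ be continuously differentiable on ℝⁿ \ {0}, and let Q be an n×n orthogonal matrix with F(Q·v) = F(v) for all v ∈ ℝⁿ. Let H be the set of torsion-type tensors T = (T^c_{ab}) (antisymmetric in a, b) such that for every nonzero v ∈ ℝⁿ and every i ∈ {1,…,n}: ½·Σ_{j,r} vʲ·( T^i_{jr} + T^j_{ir} − T^r_{ij} )·∂F/∂yʳ(v) = 0. Define the action of Q on torsion-type tensors by (Q·T)^c_{ab} = Σ_{i,j,r} Qⁱₐ·Qʲ_b·(Q⁻¹)ᶜᵣ·T^r_{ij}. Then H is invariant under this action: if T ∈ H then Q·T ∈ H. -/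

import Mathlib

open Finset

/-- The `r`-th partial derivative of `F` at `v`. -/
noncomputable def pd {n : ℕ} (F : (Fin n → ℝ) → ℝ) (v : Fin n → ℝ) (r : Fin n) : ℝ :=
  fderiv ℝ F v (Pi.single r 1)

/-- `H` : the set of torsion-type tensors `T` (we write `T a b c` for `T^c_{ab}`,
antisymmetric in `a, b`) satisfying the homogeneous compatibility system
`½·Σ_{j,r} vʲ·(T^i_{jr} + T^j_{ir} − T^r_{ij})·∂F/∂yʳ(v) = 0` for all `v ≠ 0` and all `i`. -/
noncomputable def compatKernel {n : ℕ} (F : (Fin n → ℝ) → ℝ) :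
    Set (Fin n → Fin n → Fin n → ℝ) :=
  {T | (∀ a b c, T a b c = - T b a c) ∧
    ∀ v : Fin n → ℝ, v ≠ 0 → ∀ i,
      (1 / 2) * ∑ j, ∑ r, v j * (T j r i + T i r j - T i j r) * pd F v r = 0}

/-- The action `(Q·T)^c_{ab} = Σ_{i,j,r} Qⁱₐ·Qʲ_b·(Q⁻¹)ᶜᵣ·T^r_{ij}` of a matrix on
torsion-type tensors, corresponding to `(φT)(v,w) = φ⁻¹ T(φv, φw)`. -/
noncomputable def matAction {n : ℕ} (Q : Matrix (Fin n) (Fin n) ℝ)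
    (T : Fin n → Fin n → Fin n → ℝ) : Fin n → Fin n → Fin n → ℝ :=
  fun a b c => ∑ i, ∑ j, ∑ r, Q i a * Q j b * Q⁻¹ c r * T i j r

section Helpers

variable {n : ℕ}

private lemma swap12 (f : Fin n → Fin n → Fin n → ℝ) :
    ∑ a, ∑ b, ∑ c, f a b c = ∑ b, ∑ a, ∑ c, f a b c := Finset.sum_comm

private lemma swap23 (f : Fin n → Fin n → Fin n → ℝ) :
    ∑ a, ∑ b, ∑ c, f a b c = ∑ a, ∑ c, ∑ b, f a b c :=
  Finset.sum_congr rfl fun _ _ => Finset.sum_comm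

private lemma sum3_rev (f : Fin n → Fin n → Fin n → ℝ) :
    ∑ a, ∑ b, ∑ c, f a b c = ∑ c, ∑ b, ∑ a, f a b c := by
  rw [swap23, swap12, swap23]

/-- Orthogonality collapse. -/
private lemma ortho_collapse (Q : Matrix (Fin n) (Fin n) ℝ)
    (horth : ∀ b s, ∑ r, Q b r * Q s r = if b = s then (1:ℝ) else 0)
    (X P : Fin n → ℝ) :
    ∑ r, (∑ b, Q b r * X b) * (∑ s, Q s r * P s) = ∑ b, X b * P b := by
  calc ∑ r, (∑ b, Q b r * X b) * (∑ s, Q s r * P s)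
      = ∑ r, ∑ b, ∑ s, (Q b r * Q s r) * (X b * P s) := by
        refine Finset.sum_congr rfl fun r _ => ?_
        rw [Finset.sum_mul_sum]
        exact Finset.sum_congr rfl fun b _ => Finset.sum_congr rfl fun s _ => by ring
    _ = ∑ b, ∑ s, ∑ r, (Q b r * Q s r) * (X b * P s) := by
        rw [Finset.sum_comm]
        exact Finset.sum_congr rfl fun b _ => Finset.sum_comm
    _ = ∑ b, ∑ s, (∑ r, Q b r * Q s r) * (X b * P s) := by
        refine Finset.sum_congr rfl fun b _ => Finset.sum_congr rfl fun s _ => ?_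
        rw [Finset.sum_mul]
    _ = ∑ b, X b * P b := by
        simp only [horth, ite_mul, one_mul, zero_mul]
        refine Finset.sum_congr rfl fun b _ => ?_
        rw [Finset.sum_ite_eq]
        simp

/-- Main collapse identity for one of the three terms. -/
private lemma keyA (Q : Matrix (Fin n) (Fin n) ℝ)
    (horth : ∀ b s, ∑ r, Q b r * Q s r = if b = s then (1:ℝ) else 0)
    (v P : Fin n → ℝ) (G : Fin n → Fin n → Fin n → ℝ) (i : Fin n) :
    ∑ j, ∑ r, v j * (∑ a, ∑ b, ∑ c, Q a j * Q b r * Q c i * G a b c) * (∑ s, Q s r * P s)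
      = ∑ k, Q k i * ∑ j, ∑ r, (∑ m, Q j m * v m) * G j r k * P r := by
  calc ∑ j, ∑ r, v j * (∑ a, ∑ b, ∑ c, Q a j * Q b r * Q c i * G a b c) * (∑ s, Q s r * P s)
      = ∑ j, v j * ∑ r, (∑ b, Q b r * (∑ a, ∑ c, Q a j * Q c i * G a b c))
            * (∑ s, Q s r * P s) := by
        refine Finset.sum_congr rfl fun j _ => ?_
        rw [Finset.mul_sum]
        refine Finset.sum_congr rfl fun r _ => ?_
        rw [show (∑ a, ∑ b, ∑ c, Q a j * Q b r * Q c i * G a b c)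
            = ∑ b, Q b r * (∑ a, ∑ c, Q a j * Q c i * G a b c) from ?_, mul_assoc]
        rw [swap12]
        refine Finset.sum_congr rfl fun b _ => ?_
        simp only [Finset.mul_sum]
        exact Finset.sum_congr rfl fun a _ => Finset.sum_congr rfl fun c _ => by ring
    _ = ∑ j, v j * ∑ b, (∑ a, ∑ c, Q a j * Q c i * G a b c) * P b := by
        refine Finset.sum_congr rfl fun j _ => ?_
        rw [ortho_collapse Q horth]
    _ = ∑ a, ∑ b, ∑ c, (∑ m, Q a m * v m) * (Q c i * G a b c * P b) := by
        calc ∑ j, v j * ∑ b, (∑ a, ∑ c, Q a j * Q c i * G a b c) * P b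
            = ∑ j, ∑ a, ∑ b, ∑ c, Q a j * v j * (Q c i * G a b c * P b) := by
              refine Finset.sum_congr rfl fun j _ => ?_
              rw [Finset.mul_sum, swap12]
              refine Finset.sum_congr rfl fun a _ => ?_
              simp only [Finset.sum_mul, Finset.mul_sum]
              exact Finset.sum_congr rfl fun b _ =>
                Finset.sum_congr rfl fun c _ => by ring
          _ = ∑ a, ∑ j, ∑ b, ∑ c, Q a j * v j * (Q c i * G a b c * P b) :=
              Finset.sum_comm
          _ = ∑ a, ∑ b, ∑ c, (∑ m, Q a m * v m) * (Q c i * G a b c * P b) := by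
              refine Finset.sum_congr rfl fun a _ => ?_
              rw [Finset.sum_comm]
              refine Finset.sum_congr rfl fun b _ => ?_
              rw [Finset.sum_comm]
              refine Finset.sum_congr rfl fun c _ => ?_
              rw [Finset.sum_mul]
    _ = ∑ k, Q k i * ∑ j, ∑ r, (∑ m, Q j m * v m) * G j r k * P r := by
        calc ∑ a, ∑ b, ∑ c, (∑ m, Q a m * v m) * (Q c i * G a b c * P b)
            = ∑ a, ∑ c, ∑ b, (∑ m, Q a m * v m) * (Q c i * G a b c * P b) := swap23 _
          _ = ∑ c, ∑ a, ∑ b, (∑ m, Q a m * v m) * (Q c i * G a b c * P b) := swap12 _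
          _ = ∑ k, Q k i * ∑ j, ∑ r, (∑ m, Q j m * v m) * G j r k * P r := by
              refine Finset.sum_congr rfl fun k _ => ?_
              simp only [Finset.mul_sum]
              exact Finset.sum_congr rfl fun j _ =>
                Finset.sum_congr rfl fun r _ => by ring

/-- Expansion of a continuous linear map on a pi type. -/
private lemma clm_expand (L : (Fin n → ℝ) →L[ℝ] ℝ) (x : Fin n → ℝ) :
    L x = ∑ s, x s * L (Pi.single s 1) := by
  have hx : x = ∑ s, x s • (Pi.single s (1:ℝ) : Fin n → ℝ) := by
    funext t
    simp [Finset.sum_apply, Pi.single_apply]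
  conv_lhs => rw [hx]
  rw [map_sum]
  simp [smul_eq_mul]

end Helpers

/-- If `Q` is an orthogonal matrix leaving `F` invariant, then the solution set `H` of the
homogeneous compatibility system is invariant under the action of `Q`. -/
theorem compatKernel_invariant {n : ℕ} (F : (Fin n → ℝ) → ℝ)
    (hdiff : ContDiffOn ℝ 1 F {(0 : Fin n → ℝ)}ᶜ)
    (Q : Matrix (Fin n) (Fin n) ℝ) (hQ : Q ∈ Matrix.orthogonalGroup (Fin n) ℝ)
    (hinv : ∀ v : Fin n → ℝ, F (Q.mulVec v) = F v)
    (T : Fin n → Fin n → Fin n → ℝ) (hT : T ∈ compatKernel F) :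
    matAction Q T ∈ compatKernel F := by
  obtain ⟨hanti, hcomp⟩ := hT
  have hQQ : Q * Q.transpose = 1 := by
    have := (Matrix.mem_orthogonalGroup_iff (Fin n) ℝ).mp hQ
    exact this
  have hQQ' : Q.transpose * Q = 1 := by
    have := (Matrix.mem_orthogonalGroup_iff' (Fin n) ℝ).mp hQ
    exact this
  have hQinv : Q⁻¹ = Q.transpose := Matrix.inv_eq_right_inv hQQ
  have horth : ∀ b s, ∑ r, Q b r * Q s r = if b = s then (1:ℝ) else 0 := by
    intro b s
    have := congrArg (fun M => M b s) hQQ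
    simpa [Matrix.mul_apply, Matrix.transpose_apply, Matrix.one_apply] using this
  have hS : ∀ a b c, matAction Q T a b c
      = ∑ x, ∑ y, ∑ z, Q x a * Q y b * Q z c * T x y z := by
    intro a b c
    simp [matAction, hQinv, Matrix.transpose_apply]
  constructor
  · -- antisymmetry
    intro a b c
    rw [hS, hS, ← Finset.sum_neg_distrib]
    rw [Finset.sum_comm]
    refine Finset.sum_congr rfl fun x _ => ?_
    rw [← Finset.sum_neg_distrib]
    refine Finset.sum_congr rfl fun y _ => ?_
    rw [← Finset.sum_neg_distrib]
    refine Finset.sum_congr rfl fun z _ => ?_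
    rw [hanti y x z]
    ring
  · -- compatibility system
    intro v hv i
    set w : Fin n → ℝ := Q.mulVec v with hwdef
    have hw : w ≠ 0 := by
      intro h
      apply hv
      have : Q.transpose.mulVec w = v := by
        rw [hwdef, Matrix.mulVec_mulVec, hQQ', Matrix.one_mulVec]
      rw [h, Matrix.mulVec_zero] at this
      exact this.symm
    have hdF : DifferentiableAt ℝ F w := by
      have h1 : DifferentiableOn ℝ F {(0 : Fin n → ℝ)}ᶜ := hdiff.differentiableOn one_ne_zero
      exact h1.differentiableAt (IsOpen.mem_nhds isOpen_compl_singleton hw)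
    have hpd : ∀ r, pd F v r = ∑ s, Q s r * pd F w s := by
      set L : (Fin n → ℝ) →L[ℝ] (Fin n → ℝ) :=
        LinearMap.toContinuousLinearMap (Matrix.mulVecLin Q) with hL
      have hLapp : ∀ x, L x = Q.mulVec x := fun x => rfl
      have hFL : F ∘ L = F := by
        funext x
        simp [hLapp, hinv]
      have hfd : fderiv ℝ F v = (fderiv ℝ F w).comp L := by
        conv_lhs => rw [← hFL]
        rw [fderiv_comp v (by rw [hLapp]; exact hdF) L.differentiableAt]
        rw [L.fderiv, hLapp]
      intro r
      rw [pd, hfd]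
      simp only [ContinuousLinearMap.comp_apply]
      rw [clm_expand (fderiv ℝ F w) (L (Pi.single r 1))]
      refine Finset.sum_congr rfl fun s _ => ?_
      congr 1
      rw [hLapp, Matrix.mulVec_single]
      simp [pd]
    set P : Fin n → ℝ := pd F w with hP
    have hwm : ∀ j, (∑ m, Q j m * v m) = w j := by
      intro j
      simp [hwdef, Matrix.mulVec, dotProduct]
    have hE : ∀ k, ∑ j, ∑ r, w j * (T j r k + T k r j - T k j r) * P r = 0 := by
      intro k
      have := hcomp w hw k
      linarith
    -- reindexings of the three occurrences of matAction
    have hS2 : ∀ j r, matAction Q T i r j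
        = ∑ a, ∑ b, ∑ c, Q a j * Q b r * Q c i * T c b a := by
      intro j r
      rw [hS, sum3_rev (fun a b c => Q a j * Q b r * Q c i * T c b a)]
      refine Finset.sum_congr rfl fun x _ => Finset.sum_congr rfl fun y _ =>
        Finset.sum_congr rfl fun z _ => by ring
    have hS3 : ∀ j r, matAction Q T i j r
        = ∑ a, ∑ b, ∑ c, Q a j * Q b r * Q c i * T c a b := by
      intro j r
      rw [hS, show (∑ a, ∑ b, ∑ c, Q a j * Q b r * Q c i * T c a b)
          = ∑ c, ∑ a, ∑ b, Q a j * Q b r * Q c i * T c a b by rw [swap23, swap12]]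
      refine Finset.sum_congr rfl fun x _ => Finset.sum_congr rfl fun y _ =>
        Finset.sum_congr rfl fun z _ => by ring
    have h1 : ∑ j, ∑ r, v j * matAction Q T j r i * pd F v r
        = ∑ k, Q k i * ∑ j, ∑ r, w j * T j r k * P r := by
      calc ∑ j, ∑ r, v j * matAction Q T j r i * pd F v r
          = ∑ j, ∑ r, v j * (∑ a, ∑ b, ∑ c, Q a j * Q b r * Q c i * T a b c)
              * (∑ s, Q s r * P s) := by
            refine Finset.sum_congr rfl fun j _ => Finset.sum_congr rfl fun r _ => ?_
            rw [hS, hpd]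
        _ = ∑ k, Q k i * ∑ j, ∑ r, w j * T j r k * P r := by
            rw [keyA Q horth v P T i]
            refine Finset.sum_congr rfl fun k _ => ?_
            congr 1
    have h2 : ∑ j, ∑ r, v j * matAction Q T i r j * pd F v r
        = ∑ k, Q k i * ∑ j, ∑ r, w j * T k r j * P r := by
      calc ∑ j, ∑ r, v j * matAction Q T i r j * pd F v r
          = ∑ j, ∑ r, v j * (∑ a, ∑ b, ∑ c, Q a j * Q b r * Q c i * T c b a)
              * (∑ s, Q s r * P s) := by
            refine Finset.sum_congr rfl fun j _ => Finset.sum_congr rfl fun r _ => ?_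
            rw [hS2, hpd]
        _ = ∑ k, Q k i * ∑ j, ∑ r, w j * T k r j * P r := by
            rw [keyA Q horth v P (fun a b c => T c b a) i]
            refine Finset.sum_congr rfl fun k _ => ?_
            congr 1
    have h3 : ∑ j, ∑ r, v j * matAction Q T i j r * pd F v r
        = ∑ k, Q k i * ∑ j, ∑ r, w j * T k j r * P r := by
      calc ∑ j, ∑ r, v j * matAction Q T i j r * pd F v r
          = ∑ j, ∑ r, v j * (∑ a, ∑ b, ∑ c, Q a j * Q b r * Q c i * T c a b)
              * (∑ s, Q s r * P s) := by
            refine Finset.sum_congr rfl fun j _ => Finset.sum_congr rfl fun r _ => ?_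
            rw [hS3, hpd]
        _ = ∑ k, Q k i * ∑ j, ∑ r, w j * T k j r * P r := by
            rw [keyA Q horth v P (fun a b c => T c a b) i]
            refine Finset.sum_congr rfl fun k _ => ?_
            congr 1
    have key : ∑ j, ∑ r, v j * (matAction Q T j r i + matAction Q T i r j
          - matAction Q T i j r) * pd F v r
        = ∑ k, Q k i * ∑ j, ∑ r, w j * (T j r k + T k r j - T k j r) * P r := by
      calc ∑ j, ∑ r, v j * (matAction Q T j r i + matAction Q T i r j
              - matAction Q T i j r) * pd F v r
          = (∑ j, ∑ r, v j * matAction Q T j r i * pd F v r)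
            + (∑ j, ∑ r, v j * matAction Q T i r j * pd F v r)
            - (∑ j, ∑ r, v j * matAction Q T i j r * pd F v r) := by
            rw [← Finset.sum_add_distrib, ← Finset.sum_sub_distrib]
            refine Finset.sum_congr rfl fun j _ => ?_
            rw [← Finset.sum_add_distrib, ← Finset.sum_sub_distrib]
            exact Finset.sum_congr rfl fun r _ => by ring
        _ = (∑ k, Q k i * ∑ j, ∑ r, w j * T j r k * P r)
            + (∑ k, Q k i * ∑ j, ∑ r, w j * T k r j * P r)
            - (∑ k, Q k i * ∑ j, ∑ r, w j * T k j r * P r) := by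
            rw [h1, h2, h3]
        _ = ∑ k, Q k i * ∑ j, ∑ r, w j * (T j r k + T k r j - T k j r) * P r := by
            rw [← Finset.sum_add_distrib, ← Finset.sum_sub_distrib]
            refine Finset.sum_congr rfl fun k _ => ?_
            rw [← mul_add, ← mul_sub]
            congr 1
            rw [← Finset.sum_add_distrib, ← Finset.sum_sub_distrib]
            refine Finset.sum_congr rfl fun j _ => ?_
            rw [← Finset.sum_add_distrib, ← Finset.sum_sub_distrib]
            exact Finset.sum_congr rfl fun r _ => by ring
    rw [key]
    simp [hE]
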